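/- arXiv:2106.00071 — 2 statements merged into one kernel-verified Lean document; each statement's English description precedes it below -/
import Mathlib

section
/- Let n_1 ∈ [l_1 m_{k−1}, (l_1+1) m_{k−1} − 1] and n_2 ∈ [l_2 m_{k−1}, (l_2+1) m_{k−1} − 1] with 1 ≤ l_1 < l_2 ≤ p_k − 1, and let e be any interval of the form [j/m_{k−1}, (j+1)/m_{k−1}). Then ∫_e w_{n_1} · conj(w_{n_2}) = 0; i.e., such Vilenkin functions are orthogonal in L²(e). -/
open MeasureTheory Finset

noncomputable section

/-- Partial products: `vm p 0 = 1`, `vm p k = p 0 * p 1 * ... * p (k-1)`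
(so `vm p k` is the paper's `m_k` with `p i` the paper's `p_{i+1}`). -/
def vm (p : ℕ → ℕ) : ℕ → ℕ
  | 0 => 1
  | k+1 => vm p k * p k

/-- The `i`-th mixed-radix digit of `n` (0-indexed: this is the paper's `α_{i+1}`). -/
def vdigit (p : ℕ → ℕ) (n i : ℕ) : ℕ := n / vm p i % p i

/-- Digitwise addition mod `p i` of the mixed-radix digits (the paper's `k ∔ l`). -/
def vadd (p : ℕ → ℕ) (a b : ℕ) : ℕ :=
  ∑ i ∈ Finset.range (a + b + 1), (vdigit p a i + vdigit p b i) % p i * vm p i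

/-- Digitwise negation: the inverse of `a` with respect to `vadd`. -/
def vneg (p : ℕ → ℕ) (a : ℕ) : ℕ :=
  ∑ i ∈ Finset.range (a + 1), (p i - vdigit p a i) % p i * vm p i

/-- Digitwise subtraction (the paper's `n ∸ a`). -/
def vsub (p : ℕ → ℕ) (a b : ℕ) : ℕ := vadd p a (vneg p b)

/-- The generalized Rademacher function `rad p k = r_{k+1}`:
constant on `[j/m_{k+1}, (j+1)/m_{k+1})` with value `exp(2πi (j mod p_{k+1}) / p_{k+1})`. -/
def rad (p : ℕ → ℕ) (k : ℕ) (x : ℝ) : ℂ :=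
  Complex.exp (2 * Real.pi * Complex.I *
    ((⌊x * (vm p (k+1) : ℝ)⌋ % (p k : ℤ) : ℤ) : ℂ) / (p k : ℂ))

/-- The Vilenkin function `w_n = ∏ r_{i+1}^{α_{i+1}}` where `α` are the digits of `n`. -/
def vw (p : ℕ → ℕ) (n : ℕ) (x : ℝ) : ℂ :=
  ∏ i ∈ Finset.range (n + 1), rad p i x ^ vdigit p n i

/-- The Vilenkin–Fourier coefficient `(f, w_n)`. -/
def vip (p : ℕ → ℕ) (f : ℝ → ℂ) (n : ℕ) : ℂ :=
  ∫ x in Set.Ico (0:ℝ) 1, f x * (starRingEnd ℂ) (vw p n x)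

/-- `E_k f = ∑_{n < m_k} (f, w_n) w_n`. -/
def vE (p : ℕ → ℕ) (k : ℕ) (f : ℝ → ℂ) (x : ℝ) : ℂ :=
  ∑ n ∈ Finset.range (vm p k), vip p f n * vw p n x

/-- The martingale difference `Δ_k f = E_k f - E_{k-1} f` (for `k ≥ 1`). -/
def vD (p : ℕ → ℕ) (k : ℕ) (f : ℝ → ℂ) (x : ℝ) : ℂ :=
  vE p k f x - vE p (k-1) f x

/-- The block projection `Δ_{k,l} f = ∑_{n = l·m_{k-1}}^{(l+1)m_{k-1}-1} (f, w_n) w_n`. -/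
def vDkl (p : ℕ → ℕ) (k l : ℕ) (f : ℝ → ℂ) (x : ℝ) : ℂ :=
  ∑ n ∈ Finset.Ico (l * vm p (k-1)) ((l+1) * vm p (k-1)), vip p f n * vw p n x

/-- The martingale square function `S f = (|Δ_0 f|² + ∑_{k≥1} |Δ_k f|²)^{1/2}`. -/
def vS (p : ℕ → ℕ) (f : ℝ → ℂ) (x : ℝ) : ℝ :=
  Real.sqrt (‖vE p 0 f x‖^2 + ∑' k : ℕ, ‖vD p (k+1) f x‖^2)

/-- The Vilenkin square function
`S̃ f = (|Δ_0 f|² + ∑_{k≥1} ∑_{l=1}^{p_k-1} |Δ_{k,l} f|²)^{1/2}`. -/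
def vtS (p : ℕ → ℕ) (f : ℝ → ℂ) (x : ℝ) : ℝ :=
  Real.sqrt (‖vE p 0 f x‖^2 + ∑' k : ℕ, ∑ l ∈ Finset.Ico 1 (p k), ‖vDkl p (k+1) l f x‖^2)

lemma vm_pos (p : ℕ → ℕ) (hp : ∀ i, 2 ≤ p i) : ∀ k, 0 < vm p k
  | 0 => Nat.one_pos
  | (k+1) => Nat.mul_pos (vm_pos p hp k) (lt_of_lt_of_le Nat.zero_lt_two (hp k))

lemma vm_dvd (p : ℕ → ℕ) {i j : ℕ} (h : i ≤ j) : vm p i ∣ vm p j := by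
  induction j with
  | zero => simp_all
  | succ n ih =>
    rcases Nat.lt_or_ge i (n+1) with h' | h'
    · exact (ih (Nat.lt_succ_iff.mp h')).mul_right _
    · have : i = n+1 := le_antisymm h h'
      subst this; rfl

lemma vm_le (p : ℕ → ℕ) (hp : ∀ i, 2 ≤ p i) {i j : ℕ} (h : i ≤ j) : vm p i ≤ vm p j :=
  Nat.le_of_dvd (vm_pos p hp j) (vm_dvd p h)

lemma lt_vm (p : ℕ → ℕ) (hp : ∀ i, 2 ≤ p i) : ∀ k, k < vm p k
  | 0 => Nat.one_pos
  | (k+1) => by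
    have h1 := lt_vm p hp k
    have h2 := hp k
    have h3 := vm_pos p hp k
    show k + 1 < vm p k * p k
    nlinarith

lemma floor_div_Ico {a b s : ℕ} (ha : 0 < a) (hab : a ∣ b) {x : ℝ}
    (hx : (s : ℝ) / (b : ℝ) ≤ x) (hx' : x < ((s : ℝ) + 1) / (b : ℝ)) :
    ⌊x * (a : ℝ)⌋ = ((s / (b / a) : ℕ) : ℤ) := by
  obtain ⟨d, rfl⟩ := hab
  have hd : 0 < d := by
    rcases Nat.eq_zero_or_pos d with h | h
    · subst h; simp at hx hx'; linarith
    · exact h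
  rw [Nat.mul_div_cancel_left d ha]
  have hq1 : s / d * d ≤ s := Nat.div_mul_le_self s d
  have hq2 : s + 1 ≤ d * (s / d) + d := by
    have h1 := Nat.div_add_mod s d
    have h2 := Nat.mod_lt s hd
    omega
  have hq1R : ((s / d : ℕ) : ℝ) * (d : ℝ) ≤ (s : ℝ) := by exact_mod_cast hq1
  have hq2R : (s : ℝ) + 1 ≤ (d : ℝ) * ((s / d : ℕ) : ℝ) + (d : ℝ) := by exact_mod_cast hq2
  have haR : (0 : ℝ) < (a : ℝ) := by exact_mod_cast ha
  have hdR : (0 : ℝ) < (d : ℝ) := by exact_mod_cast hd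
  have hbR : (0 : ℝ) < ((a : ℝ) * (d : ℝ)) := by positivity
  have hbcast : (((a * d : ℕ)) : ℝ) = (a : ℝ) * (d : ℝ) := by push_cast; ring
  rw [hbcast] at hx hx'
  have hx1 : (s : ℝ) ≤ x * ((a : ℝ) * (d : ℝ)) := by
    rw [div_le_iff₀ hbR] at hx; linarith
  have hx2 : x * ((a : ℝ) * (d : ℝ)) < (s : ℝ) + 1 := by
    rw [lt_div_iff₀ hbR] at hx'; linarith
  have hgoal1 : ((s / d : ℕ) : ℝ) ≤ x * (a : ℝ) := by nlinarith
  have hgoal2 : x * (a : ℝ) < ((s / d : ℕ) : ℝ) + 1 := by nlinarith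
  rw [Int.floor_eq_iff]
  refine ⟨by exact_mod_cast hgoal1, by exact_mod_cast hgoal2⟩

lemma vdigit_eq_zero (p : ℕ → ℕ) {n i : ℕ} (h : n < vm p i) : vdigit p n i = 0 := by
  unfold vdigit; rw [Nat.div_eq_of_lt h]; simp

lemma vdigit_top (p : ℕ → ℕ) {l n K : ℕ} (hl : l < p K)
    (hn : l * vm p K ≤ n) (hn' : n < (l + 1) * vm p K) : vdigit p n K = l := by
  unfold vdigit
  rw [Nat.div_eq_of_lt_le hn hn', Nat.mod_eq_of_lt hl]

lemma biUnion_Ico_eq (a : ℕ → ℝ) (ha : Monotone a) (n : ℕ) :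
    (⋃ t ∈ Finset.range n, Set.Ico (a t) (a (t+1))) = Set.Ico (a 0) (a n) := by
  induction n with
  | zero => simp
  | succ m ih =>
    rw [Finset.range_add_one, Finset.set_biUnion_insert, ih, Set.union_comm,
      Set.Ico_union_Ico_eq_Ico (ha (Nat.zero_le m)) (ha (Nat.le_succ m))]

lemma vw_piece (p : ℕ → ℕ) (hp : ∀ i, 2 ≤ p i) (K l n t j : ℕ)
    (hl : 1 ≤ l) (hlP : l < p K)
    (hn : l * vm p K ≤ n) (hn' : n < (l + 1) * vm p K) (ht : t < p K)
    {x : ℝ} (hx : ((j * p K + t : ℕ) : ℝ) / (vm p (K+1) : ℝ) ≤ x)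
    (hx' : x < (((j * p K + t : ℕ) : ℝ) + 1) / (vm p (K+1) : ℝ)) :
    vw p n x = vw p n ((j : ℝ) / (vm p K : ℝ)) *
      Complex.exp (2 * Real.pi * Complex.I / (p K : ℂ)) ^ (t * l) := by
  have hP2 := hp K
  have hPpos : 0 < p K := by omega
  have hMpos := vm_pos p hp K
  have hM'pos := vm_pos p hp (K+1)
  have hM' : vm p (K+1) = vm p K * p K := rfl
  have hMR : (0 : ℝ) < (vm p K : ℝ) := by exact_mod_cast hMpos
  have hM'R : (0 : ℝ) < (vm p (K+1) : ℝ) := by exact_mod_cast hM'pos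
  have hPR : (0 : ℝ) < (p K : ℝ) := by exact_mod_cast hPpos
  set A : ℝ := (j : ℝ) / (vm p K : ℝ) with hA
  have hAx : (j : ℝ) / (vm p K : ℝ) ≤ A := le_refl _
  have hAx' : A < ((j : ℝ) + 1) / (vm p K : ℝ) := by
    rw [hA, div_lt_div_iff₀ hMR hMR]; nlinarith
  have heq : ((j * p K : ℕ) : ℝ) / (vm p (K+1) : ℝ) = A := by
    rw [hA, hM']; push_cast; field_simp
  have hAx2 : ((j * p K : ℕ) : ℝ) / (vm p (K+1) : ℝ) ≤ A := heq.le
  have hAx2' : A < (((j * p K : ℕ) : ℝ) + 1) / (vm p (K+1) : ℝ) := by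
    rw [← heq, div_lt_div_iff₀ hM'R hM'R]; nlinarith
  have hfKx : ⌊x * (vm p (K+1) : ℝ)⌋ = ((j * p K + t : ℕ) : ℤ) := by
    have := floor_div_Ico hM'pos dvd_rfl hx hx'
    rwa [Nat.div_self hM'pos, Nat.div_one] at this
  have hfKA : ⌊A * (vm p (K+1) : ℝ)⌋ = ((j * p K : ℕ) : ℤ) := by
    have := floor_div_Ico hM'pos dvd_rfl hAx2 hAx2'
    rwa [Nat.div_self hM'pos, Nat.div_one] at this
  have hKmem : K ∈ Finset.range (n+1) := by
    have h1 := lt_vm p hp K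
    have h2 : vm p K ≤ n := le_trans (Nat.le_mul_of_pos_left (vm p K) hl) hn
    exact Finset.mem_range.mpr (by omega)
  have hdig : vdigit p n K = l := vdigit_top p hlP hn hn'
  have hrest : ∏ i ∈ (Finset.range (n+1)).erase K, rad p i x ^ vdigit p n i
      = ∏ i ∈ (Finset.range (n+1)).erase K, rad p i A ^ vdigit p n i := by
    refine Finset.prod_congr rfl ?_
    intro i hi
    rcases Nat.lt_or_ge i K with hiK | hiK
    · have hdvd : vm p (i+1) ∣ vm p K := vm_dvd p (by omega)
      have hdvd' : vm p (i+1) ∣ vm p (K+1) := vm_dvd p (by omega)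
      have hfx := floor_div_Ico (vm_pos p hp (i+1)) hdvd' hx hx'
      have hfA := floor_div_Ico (vm_pos p hp (i+1)) hdvd hAx hAx'
      have harith : (j * p K + t) / (vm p (K+1) / vm p (i+1)) = j / (vm p K / vm p (i+1)) := by
        obtain ⟨d, hd⟩ := hdvd
        have hipos := vm_pos p hp (i+1)
        have h1 : vm p (K+1) / vm p (i+1) = d * p K := by
          rw [hM', hd, mul_assoc, Nat.mul_div_cancel_left _ hipos]
        have h2 : vm p K / vm p (i+1) = d := by
          rw [hd, Nat.mul_div_cancel_left _ hipos]
        rw [h1, h2, mul_comm d (p K), ← Nat.div_div_eq_div_mul]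
        congr 1
        rw [mul_comm j (p K), Nat.mul_add_div hPpos, Nat.div_eq_of_lt ht, add_zero]
      have hr : rad p i x = rad p i A := by
        unfold rad
        rw [hfx, hfA, harith]
      rw [hr]
    · have hiK' : K + 1 ≤ i := by
        have hne : i ≠ K := Finset.ne_of_mem_erase hi
        omega
      have hlt : n < vm p (K+1) := by
        refine lt_of_lt_of_le hn' ?_
        rw [hM', mul_comm]
        exact Nat.mul_le_mul_left _ (by omega)
      have h0 : vdigit p n i = 0 :=
        vdigit_eq_zero p (lt_of_lt_of_le hlt (vm_le p hp hiK'))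
      rw [h0, pow_zero, pow_zero]
  have hradx : rad p K x = Complex.exp (2 * Real.pi * Complex.I / (p K : ℂ)) ^ t := by
    unfold rad
    rw [hfKx]
    have hmod : ((j * p K + t : ℕ) : ℤ) % (p K : ℤ) = (t : ℤ) := by
      push_cast
      rw [add_comm, mul_comm, Int.add_mul_emod_self_left]
      exact Int.emod_eq_of_lt (by positivity) (by exact_mod_cast ht)
    rw [hmod, ← Complex.exp_nat_mul]
    congr 1
    push_cast
    ring
  have hradA : rad p K A = 1 := by
    unfold rad
    rw [hfKA]
    have hmod : ((j * p K : ℕ) : ℤ) % (p K : ℤ) = 0 := by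
      push_cast; exact Int.mul_emod_left _ _
    rw [hmod]
    simp
  unfold vw
  rw [← Finset.mul_prod_erase _ _ hKmem, ← Finset.mul_prod_erase _ _ hKmem,
    hdig, hrest, hradx, hradA, one_pow, one_mul, ← pow_mul]
  ring

/-- Vilenkin functions from different blocks of level `k` are orthogonal
in `L²(e)` for every atom `e = [j/m_{k-1}, (j+1)/m_{k-1})` of `F_{k-1}`. -/
theorem stmt_10 (p : ℕ → ℕ) (hp : ∀ i, 2 ≤ p i) (k l₁ l₂ n₁ n₂ j : ℕ) (hk : 1 ≤ k)
    (hl1 : 1 ≤ l₁) (hl12 : l₁ < l₂) (hl2 : l₂ ≤ p (k-1) - 1)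
    (hn1 : n₁ ∈ Finset.Ico (l₁ * vm p (k-1)) ((l₁ + 1) * vm p (k-1)))
    (hn2 : n₂ ∈ Finset.Ico (l₂ * vm p (k-1)) ((l₂ + 1) * vm p (k-1)))
    (hj : j < vm p (k-1)) :
    ∫ x in Set.Ico ((j : ℝ) / vm p (k-1)) ((j + 1 : ℝ) / vm p (k-1)),
      vw p n₁ x * (starRingEnd ℂ) (vw p n₂ x) = 0 := by
  rw [Finset.mem_Ico] at hn1 hn2
  set K := k - 1 with hKdef
  have hP2 := hp K
  have hl1P : l₁ < p K := by omega
  have hl2P : l₂ < p K := by omega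
  have hPpos : 0 < p K := by omega
  have hMpos := vm_pos p hp K
  have hM'pos := vm_pos p hp (K+1)
  have hM' : vm p (K+1) = vm p K * p K := rfl
  have hMR : (0 : ℝ) < (vm p K : ℝ) := by exact_mod_cast hMpos
  have hM'R : (0 : ℝ) < (vm p (K+1) : ℝ) := by exact_mod_cast hM'pos
  have hPR : (0 : ℝ) < (p K : ℝ) := by exact_mod_cast hPpos
  set ω : ℂ := Complex.exp (2 * Real.pi * Complex.I / (p K : ℂ)) with hω
  set A : ℝ := (j : ℝ) / (vm p K : ℝ) with hA
  set C : ℂ := vw p n₁ A * (starRingEnd ℂ) (vw p n₂ A) with hC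
  set ζ : ℂ := ω ^ l₁ * (starRingEnd ℂ) ω ^ l₂ with hζ
  set a : ℕ → ℝ := fun t => ((j * p K + t : ℕ) : ℝ) / (vm p (K+1) : ℝ) with ha
  have hamono : Monotone a := by
    intro s t hst
    dsimp [a]
    rw [div_le_div_iff₀ hM'R hM'R]
    have : (j * p K + s : ℕ) ≤ (j * p K + t : ℕ) := by omega
    nlinarith [(by exact_mod_cast this : ((j * p K + s : ℕ) : ℝ) ≤ ((j * p K + t : ℕ) : ℝ))]
  have hset : Set.Ico ((j : ℝ) / (vm p K : ℝ)) (((j : ℝ) + 1) / (vm p K : ℝ))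
      = ⋃ t ∈ Finset.range (p K), Set.Ico (a t) (a (t+1)) := by
    have e0 : a 0 = (j : ℝ) / (vm p K : ℝ) := by
      dsimp [a]
      rw [div_eq_div_iff hM'R.ne' hMR.ne']
      push_cast [hM']
      ring
    have eP : a (p K) = ((j : ℝ) + 1) / (vm p K : ℝ) := by
      dsimp [a]
      rw [div_eq_div_iff hM'R.ne' hMR.ne']
      push_cast [hM']
      ring
    rw [biUnion_Ico_eq a hamono (p K), e0, eP]
  have key : ∀ t < p K, Set.EqOn (fun x => vw p n₁ x * (starRingEnd ℂ) (vw p n₂ x))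
      (fun _ => C * ζ ^ t) (Set.Ico (a t) (a (t+1))) := by
    intro t ht x hx
    obtain ⟨hx1, hx2⟩ := hx
    dsimp [a] at hx1 hx2
    have hx2' : x < (((j * p K + t : ℕ) : ℝ) + 1) / (vm p (K+1) : ℝ) := by
      refine lt_of_lt_of_le hx2 (le_of_eq ?_)
      push_cast; ring
    have h1 := vw_piece p hp K l₁ n₁ t j (by omega) hl1P hn1.1 hn1.2 ht hx1 hx2'
    have h2 := vw_piece p hp K l₂ n₂ t j (by omega) hl2P hn2.1 hn2.2 ht hx1 hx2'
    dsimp only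
    rw [h1, h2, map_mul, map_pow, hC, hζ, ← hω]
    rw [mul_comm t l₁, mul_comm t l₂, pow_mul, pow_mul, mul_pow]
    ring
  have hPC0 : (p K : ℂ) ≠ 0 := Nat.cast_ne_zero.mpr (by omega)
  have hωP : ω ^ p K = 1 := by
    rw [hω, ← Complex.exp_nat_mul,
      show ((p K : ℂ)) * (2 * Real.pi * Complex.I / (p K : ℂ)) = 2 * Real.pi * Complex.I by
        field_simp]
    exact Complex.exp_two_pi_mul_I
  have hζP : ζ ^ p K = 1 := by
    rw [hζ, mul_pow, ← pow_mul, mul_comm l₁ (p K), pow_mul, hωP, one_pow, one_mul,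
      ← map_pow, ← map_pow, ← pow_mul, mul_comm l₂ (p K), pow_mul, hωP, one_pow, map_one]
  have hω0 : ω ≠ 0 := Complex.exp_ne_zero _
  have hζ1 : ζ ≠ 1 := by
    intro hcon
    have hconjz : (starRingEnd ℂ) (2 * (Real.pi : ℂ) * Complex.I / (p K : ℂ))
        = -(2 * (Real.pi : ℂ) * Complex.I / (p K : ℂ)) := by
      simp only [map_div₀, map_mul, Complex.conj_I, map_ofNat, Complex.conj_ofReal,
        map_natCast]
      ring
    have hinv : (starRingEnd ℂ) ω = ω⁻¹ := by
      rw [hω, ← Complex.exp_conj, hconjz, Complex.exp_neg]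
    rw [hζ, hinv, inv_pow] at hcon
    have heq := (mul_inv_eq_one₀ (pow_ne_zero _ hω0)).mp hcon
    have := (Complex.isPrimitiveRoot_exp (p K) (by omega)).pow_inj hl1P hl2P (by
      rw [← hω]; exact heq)
    omega
  have hsum : ∑ t ∈ Finset.range (p K), ζ ^ t = 0 := by
    rw [geom_sum_eq hζ1, hζP, sub_self, zero_div]
  have hdisj : Set.Pairwise ↑(Finset.range (p K))
      (Function.onFun Disjoint fun t => Set.Ico (a t) (a (t+1))) := by
    intro s _ t _ hst
    dsimp [Function.onFun]
    rcases lt_or_gt_of_ne hst with h | h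
    · exact Set.Ico_disjoint_Ico.mpr
        (le_trans (min_le_left _ _) (le_trans (hamono (by omega)) (le_max_right _ _)))
    · exact Set.Ico_disjoint_Ico.mpr
        (le_trans (min_le_right _ _) (le_trans (hamono (by omega)) (le_max_left _ _)))
  have hint : ∀ t ∈ Finset.range (p K),
      IntegrableOn (fun x => vw p n₁ x * (starRingEnd ℂ) (vw p n₂ x))
        (Set.Ico (a t) (a (t+1))) volume := by
    intro t ht
    refine MeasureTheory.IntegrableOn.congr_fun ?_
      ((key t (Finset.mem_range.mp ht)).symm) measurableSet_Ico
    exact integrableOn_const measure_Ico_lt_top.ne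
  rw [hset, MeasureTheory.integral_biUnion_finset (Finset.range (p K))
    (fun i _ => measurableSet_Ico) hdisj hint]
  have hvol : ∀ t : ℕ, (volume (Set.Ico (a t) (a (t+1)))).toReal = 1 / (vm p (K+1) : ℝ) := by
    intro t
    rw [Real.volume_Ico, ENNReal.toReal_ofReal (sub_nonneg.mpr (hamono (Nat.le_succ t)))]
    dsimp [a]; push_cast; field_simp; ring
  calc ∑ t ∈ Finset.range (p K), ∫ x in Set.Ico (a t) (a (t+1)),
        vw p n₁ x * (starRingEnd ℂ) (vw p n₂ x)
      = ∑ t ∈ Finset.range (p K), (1 / (vm p (K+1) : ℝ)) • (C * ζ ^ t) := by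
        refine Finset.sum_congr rfl ?_
        intro t ht
        rw [MeasureTheory.setIntegral_congr_fun measurableSet_Ico
          (key t (Finset.mem_range.mp ht)), MeasureTheory.setIntegral_const, measureReal_def, hvol]
    _ = 0 := by
        rw [← Finset.smul_sum, ← Finset.mul_sum, hsum, mul_zero, smul_zero]
end
end

section
/- For a nonnegative integer a with mixed-radix digits α_1, …, α_t (α_i ≤ p_i − 1) and for 1 ≤ j ≤ t−1, define the interval J̃_j = [α_{t}m_{t−1}+…+α_{j+1}m_j + (α_j+1)m_{j−1}, α_t m_{t−1}+…+α_{j+1}m_j + p_j m_{j−1} − 1]. Then J̃_j ∸ a (elementwise group subtraction of a) equals the set of integers whose digit at position j lies in [1, p_j − 1 − α_j], whose digits at positions above j are all 0, and whose digits below position j are arbitrary; in particular J̃_j ∸ a ⊆ [m_{j−1}, p_j·m_{j−1} − 1]. -/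
open MeasureTheory Finset

noncomputable section

namespace Stmt18Aux

variable (p : ℕ → ℕ)

lemma vm_succ (k : ℕ) : vm p (k+1) = vm p k * p k := rfl

variable (hp : ∀ i, 2 ≤ p i)
include hp

lemma vm_pos (k : ℕ) : 0 < vm p k := by
  induction k with
  | zero => exact Nat.one_pos
  | succ k ih => exact Nat.mul_pos ih (lt_of_lt_of_le Nat.zero_lt_two (hp k))

lemma two_pow_le_vm (k : ℕ) : 2 ^ k ≤ vm p k := by
  induction k with
  | zero => simp [vm]
  | succ k ih =>
    calc 2 ^ (k+1) = 2 ^ k * 2 := by ring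
    _ ≤ vm p k * p k := Nat.mul_le_mul ih (hp k)
    _ = vm p (k+1) := rfl

lemma lt_vm {n i : ℕ} (h : n < i) : n < vm p i :=
  lt_of_lt_of_le (lt_of_lt_of_le (Nat.lt_two_pow_self (n := n))
    (Nat.pow_le_pow_right (by norm_num) h.le)) (two_pow_le_vm p hp i)

lemma vm_dvd {k l : ℕ} (h : k ≤ l) : vm p k ∣ vm p l := by
  induction l, h using Nat.le_induction with
  | base => rfl
  | succ l hl ih => exact ih.mul_right (p l)

lemma vm_mono {k l : ℕ} (h : k ≤ l) : vm p k ≤ vm p l :=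
  Nat.le_of_dvd (vm_pos p hp l) (vm_dvd p hp h)

lemma vdigit_lt (n i : ℕ) : vdigit p n i < p i :=
  Nat.mod_lt _ (lt_of_lt_of_le Nat.zero_lt_two (hp i))

lemma vdigit_eq_zero {n i : ℕ} (h : n < vm p i) : vdigit p n i = 0 := by
  unfold vdigit; rw [Nat.div_eq_of_lt h]; simp

lemma vdigit_eq_zero' {n i : ℕ} (h : n < i) : vdigit p n i = 0 :=
  vdigit_eq_zero p hp (lt_vm p hp h)

omit hp in
lemma mod_mul_decomp (n m q : ℕ) : n % (m * q) = n % m + m * (n / m % q) := by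
  have h1 : n % (m * q) % m = n % m := Nat.mod_mod_of_dvd n ⟨q, rfl⟩
  have h2 : n % (m * q) / m = n / m % q := Nat.mod_mul_right_div_self n m q
  have h3 := Nat.div_add_mod (n % (m * q)) m
  rw [h1, h2] at h3
  omega

omit hp in
lemma mod_sum (n : ℕ) : ∀ K, n % vm p K = ∑ i ∈ Finset.range K, vdigit p n i * vm p i := by
  intro K
  induction K with
  | zero => simp [vm, Nat.mod_one]
  | succ K ih =>
    rw [Finset.sum_range_succ, ← ih, vm_succ, mod_mul_decomp]
    unfold vdigit; ring

omit hp in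
lemma self_eq_sum {n K : ℕ} (h : n < vm p K) :
    n = ∑ i ∈ Finset.range K, vdigit p n i * vm p i := by
  rw [← mod_sum, Nat.mod_eq_of_lt h]

omit hp in
lemma highpart {n K k : ℕ} (hn : n < vm p K) (hk : k ≤ K) :
    vm p k * (n / vm p k) = ∑ i ∈ Finset.Ico k K, vdigit p n i * vm p i := by
  have h1 := self_eq_sum p hn
  have h2 := mod_sum p n k
  have h3 := Nat.div_add_mod n (vm p k)
  rw [Finset.range_eq_Ico] at h1 h2
  rw [← Finset.sum_Ico_consecutive _ (Nat.zero_le k) hk] at h1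
  omega

omit hp in
lemma digit_mul_vm_le (n i : ℕ) : vdigit p n i * vm p i ≤ n :=
  le_trans (Nat.mul_le_mul_right _ (Nat.mod_le _ _)) (Nat.div_mul_le_self n _)

lemma sum_lt {K : ℕ} (d : ℕ → ℕ) (hd : ∀ i, i < K → d i < p i) :
    ∑ i ∈ Finset.range K, d i * vm p i < vm p K := by
  induction K with
  | zero => simp [vm]
  | succ K ih =>
    rw [Finset.sum_range_succ, vm_succ]
    have h1 : ∑ i ∈ Finset.range K, d i * vm p i < vm p K :=
      ih (fun i hi => hd i (hi.trans (Nat.lt_succ_self K)))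
    have h2 : d K * vm p K ≤ (p K - 1) * vm p K :=
      Nat.mul_le_mul_right _ (by have := hd K (Nat.lt_succ_self K); omega)
    have h3 : vm p K + (p K - 1) * vm p K = vm p K * p K := by
      have hpK := hp K
      have : 1 + (p K - 1) = p K := by omega
      calc vm p K + (p K - 1) * vm p K = (1 + (p K - 1)) * vm p K := by ring
      _ = vm p K * p K := by rw [this]; ring
    omega

lemma digit_sum {K : ℕ} (d : ℕ → ℕ) (hd : ∀ i, i < K → d i < p i) {i : ℕ} (hi : i < K) :
    vdigit p (∑ l ∈ Finset.range K, d l * vm p l) i = d i := by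
  set s := ∑ l ∈ Finset.range K, d l * vm p l with hs
  have hsplit : s = (∑ l ∈ Finset.range i, d l * vm p l) + d i * vm p i
      + ∑ l ∈ Finset.Ico (i+1) K, d l * vm p l := by
    rw [hs]
    simp only [Finset.range_eq_Ico]
    rw [← Finset.sum_Ico_consecutive (fun l => d l * vm p l) (Nat.zero_le (i+1)) hi,
      ← Finset.sum_Ico_consecutive (fun l => d l * vm p l) (Nat.zero_le i) (Nat.le_succ i),
      Finset.sum_Ico_succ_top le_rfl, Finset.Ico_self, Finset.sum_empty, zero_add]
  have hdvd : vm p (i+1) ∣ ∑ l ∈ Finset.Ico (i+1) K, d l * vm p l :=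
    Finset.dvd_sum (fun l hl => (vm_dvd p hp (Finset.mem_Ico.mp hl).1).mul_left _)
  obtain ⟨c, hc⟩ := hdvd
  have hA : (∑ l ∈ Finset.range i, d l * vm p l) < vm p i :=
    sum_lt p hp d (fun l hl => hd l (hl.trans hi))
  have hform : s = (∑ l ∈ Finset.range i, d l * vm p l) + vm p i * (d i + p i * c) := by
    rw [hsplit, hc, vm_succ]; ring
  have hpos : 0 < vm p i := vm_pos p hp i
  unfold vdigit
  rw [hform, Nat.add_mul_div_left _ _ hpos, Nat.div_eq_of_lt hA, zero_add,
    Nat.add_mul_mod_self_left, Nat.mod_eq_of_lt (hd i hi)]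

lemma vadd_lt (a b K : ℕ) (hK : a + b + 1 ≤ K) : vadd p a b < vm p K := by
  refine lt_of_lt_of_le ?_ (vm_mono p hp hK)
  exact sum_lt p hp _ (fun i _ => Nat.mod_lt _ (lt_of_lt_of_le Nat.zero_lt_two (hp i)))

lemma vneg_lt (a K : ℕ) (hK : a + 1 ≤ K) : vneg p a < vm p K := by
  refine lt_of_lt_of_le ?_ (vm_mono p hp hK)
  exact sum_lt p hp _ (fun i _ => Nat.mod_lt _ (lt_of_lt_of_le Nat.zero_lt_two (hp i)))

lemma vadd_digit (a b i : ℕ) :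
    vdigit p (vadd p a b) i = (vdigit p a i + vdigit p b i) % p i := by
  have hd : ∀ l, l < a + b + 1 → (vdigit p a l + vdigit p b l) % p l < p l :=
    fun l _ => Nat.mod_lt _ (lt_of_lt_of_le Nat.zero_lt_two (hp l))
  by_cases hi : i < a + b + 1
  · exact digit_sum p hp _ hd hi
  · push_neg at hi
    have h1 : vdigit p a i = 0 := vdigit_eq_zero' p hp (by omega)
    have h2 : vdigit p b i = 0 := vdigit_eq_zero' p hp (by omega)
    have h3 : vdigit p (vadd p a b) i = 0 :=
      vdigit_eq_zero p hp (vadd_lt p hp a b i (by omega))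
    simp [h1, h2, h3]

lemma vneg_digit (a i : ℕ) :
    vdigit p (vneg p a) i = (p i - vdigit p a i) % p i := by
  have hd : ∀ l, l < a + 1 → (p l - vdigit p a l) % p l < p l :=
    fun l _ => Nat.mod_lt _ (lt_of_lt_of_le Nat.zero_lt_two (hp l))
  by_cases hi : i < a + 1
  · exact digit_sum p hp _ hd hi
  · push_neg at hi
    have h1 : vdigit p a i = 0 := vdigit_eq_zero' p hp (by omega)
    have h3 : vdigit p (vneg p a) i = 0 :=
      vdigit_eq_zero p hp (vneg_lt p hp a i (by omega))
    simp [h1, h3]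

lemma vsub_digit (n a i : ℕ) :
    vdigit p (vsub p n a) i = (vdigit p n i + (p i - vdigit p a i)) % p i := by
  unfold vsub
  rw [vadd_digit p hp, vneg_digit p hp, Nat.add_mod_mod]

lemma eq_of_digit_eq {a b K : ℕ} (ha : a < vm p K) (hb : b < vm p K)
    (h : ∀ i, vdigit p a i = vdigit p b i) : a = b := by
  rw [self_eq_sum p ha, self_eq_sum p hb]
  exact Finset.sum_congr rfl (fun i _ => by rw [h i])

omit hp in
lemma mod_sub_cancel {P A B : ℕ} (hA : A < P) (hB : B < P) :
    ((A + B) % P + (P - A)) % P = B := by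
  rcases Nat.lt_or_ge (A + B) P with h | h
  · rw [Nat.mod_eq_of_lt h, show A + B + (P - A) = B + P by omega,
      Nat.add_mod_right, Nat.mod_eq_of_lt hB]
  · rw [Nat.mod_eq_sub_mod h, Nat.mod_eq_of_lt (show A + B - P < P by omega),
      show A + B - P + (P - A) = B by omega, Nat.mod_eq_of_lt hB]

lemma lt_of_high_digits_zero {b j : ℕ} (h : ∀ i, j ≤ i → vdigit p b i = 0) :
    b < vm p j := by
  have hK : b < vm p (max j (b+1)) :=
    lt_vm p hp (lt_of_lt_of_le (Nat.lt_succ_self b) (le_max_right _ _))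
  have h1 := highpart p hK (le_max_left j (b+1))
  have hz : ∑ i ∈ Finset.Ico j (max j (b+1)), vdigit p b i * vm p i = 0 :=
    Finset.sum_eq_zero (fun i hi => by rw [h i (Finset.mem_Ico.mp hi).1, zero_mul])
  rw [hz] at h1
  have h2 := Nat.div_add_mod b (vm p j)
  have h3 : b % vm p j < vm p j := Nat.mod_lt _ (vm_pos p hp j)
  omega

end Stmt18Aux

/-- for `1 ≤ j ≤ t-1` (with `a < m_t`), the translated block
`J̃_j ∸ a` is exactly the set of integers whose digit at position `j` lies in
`[1, p_j - 1 - α_j]`, whose digits above `j` vanish, and whose lower digits are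
arbitrary; in particular it is contained in `[m_{j-1}, p_j m_{j-1} - 1]`. -/
theorem stmt_18 (p : ℕ → ℕ) (hp : ∀ i, 2 ≤ p i) (a t j : ℕ)
    (ha : a < vm p t) (hj1 : 1 ≤ j) (hj2 : j + 1 ≤ t) :
    ((((Finset.Ico (vm p j * (a / vm p j) + (vdigit p a (j-1) + 1) * vm p (j-1))
          (vm p j * (a / vm p j) + vm p j)).image (fun n => vsub p n a)) : Set ℕ)
        = {n : ℕ | 1 ≤ vdigit p n (j-1)
            ∧ vdigit p n (j-1) ≤ p (j-1) - 1 - vdigit p a (j-1)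
            ∧ ∀ i, j ≤ i → vdigit p n i = 0}) ∧
    ((Finset.Ico (vm p j * (a / vm p j) + (vdigit p a (j-1) + 1) * vm p (j-1))
          (vm p j * (a / vm p j) + vm p j)).image (fun n => vsub p n a))
        ⊆ Finset.Ico (vm p (j-1)) (p (j-1) * vm p (j-1)) := by
  classical
  have hj : j - 1 + 1 = j := by omega
  have hvmj := Stmt18Aux.vm_succ p (j-1)
  rw [hj] at hvmj
  have hmpos : 0 < vm p (j-1) := Stmt18Aux.vm_pos p hp (j-1)
  have hPpos : 2 ≤ p (j-1) := hp (j-1)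
  have hαlt : vdigit p a (j-1) < p (j-1) := Stmt18Aux.vdigit_lt p hp a (j-1)
  have key : ((((Finset.Ico (vm p j * (a / vm p j) + (vdigit p a (j-1) + 1) * vm p (j-1))
          (vm p j * (a / vm p j) + vm p j)).image (fun n => vsub p n a)) : Set ℕ)
        = {n : ℕ | 1 ≤ vdigit p n (j-1)
            ∧ vdigit p n (j-1) ≤ p (j-1) - 1 - vdigit p a (j-1)
            ∧ ∀ i, j ≤ i → vdigit p n i = 0}) := by
    ext b
    simp only [Finset.coe_image, Set.mem_image, Finset.mem_coe, Finset.mem_Ico,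
      Set.mem_setOf_eq]
    constructor
    · rintro ⟨n, ⟨hn1, hn2⟩, rfl⟩
      have e1 : a / vm p j * vm p j = vm p j * (a / vm p j) := Nat.mul_comm _ _
      have e2 : (a / vm p j + 1) * vm p j = vm p j * (a / vm p j) + vm p j := by ring
      have hdiv : n / vm p j = a / vm p j :=
        Nat.div_eq_of_lt_le (by omega) (by omega)
      have hhigh : ∀ i, j ≤ i → vdigit p n i = vdigit p a i := by
        intro i hi
        obtain ⟨c, hc⟩ := Stmt18Aux.vm_dvd p hp hi
        unfold vdigit
        rw [hc, ← Nat.div_div_eq_div_mul, ← Nat.div_div_eq_div_mul, hdiv]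
      have hmodn : n % vm p j = n - vm p j * (a / vm p j) := by
        have := Nat.div_add_mod n (vm p j)
        rw [hdiv] at this
        omega
      have hβeq : vdigit p n (j-1) = (n - vm p j * (a / vm p j)) / vm p (j-1) := by
        unfold vdigit
        rw [← Nat.mod_mul_right_div_self, ← hvmj, hmodn]
      have hβ1 : vdigit p a (j-1) + 1 ≤ vdigit p n (j-1) := by
        rw [hβeq, Nat.le_div_iff_mul_le hmpos]
        omega
      have hβ2 : vdigit p n (j-1) < p (j-1) := Stmt18Aux.vdigit_lt p hp n (j-1)
      have hdsub : vdigit p (vsub p n a) (j-1) = vdigit p n (j-1) - vdigit p a (j-1) := by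
        rw [Stmt18Aux.vsub_digit p hp,
          show vdigit p n (j-1) + (p (j-1) - vdigit p a (j-1))
            = (vdigit p n (j-1) - vdigit p a (j-1)) + p (j-1) by omega,
          Nat.add_mod_right, Nat.mod_eq_of_lt (by omega)]
      refine ⟨by omega, by omega, fun i hi => ?_⟩
      have hlt : vdigit p a i < p i := Stmt18Aux.vdigit_lt p hp a i
      rw [Stmt18Aux.vsub_digit p hp, hhigh i hi,
        show vdigit p a i + (p i - vdigit p a i) = p i by omega, Nat.mod_self]
    · rintro ⟨h1, h2, h3⟩
      have hblt : b < vm p j := Stmt18Aux.lt_of_high_digits_zero p hp h3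
      have hdn : ∀ i, vdigit p (vadd p a b) i = (vdigit p a i + vdigit p b i) % p i :=
        fun i => Stmt18Aux.vadd_digit p hp a b i
      have hKa : a < vm p (a + b + vadd p a b + j + 1) := Stmt18Aux.lt_vm p hp (by omega)
      have hKn : vadd p a b < vm p (a + b + vadd p a b + j + 1) :=
        Stmt18Aux.vadd_lt p hp a b _ (by omega)
      have hsub : vsub p (vadd p a b) a = b := by
        have hv1 : vsub p (vadd p a b) a < vm p (vadd p a b + vneg p a + b + 1) :=
          Stmt18Aux.vadd_lt p hp (vadd p a b) (vneg p a) _ (by omega)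
        have hv2 : b < vm p (vadd p a b + vneg p a + b + 1) := Stmt18Aux.lt_vm p hp (by omega)
        refine Stmt18Aux.eq_of_digit_eq p hp hv1 hv2 (fun i => ?_)
        rw [Stmt18Aux.vsub_digit p hp, hdn i]
        exact Stmt18Aux.mod_sub_cancel (Stmt18Aux.vdigit_lt p hp a i)
          (Stmt18Aux.vdigit_lt p hp b i)
      have hdnj : vdigit p (vadd p a b) (j-1) = vdigit p a (j-1) + vdigit p b (j-1) := by
        rw [hdn, Nat.mod_eq_of_lt (by omega)]
      have hhigh : ∀ i, j ≤ i → vdigit p (vadd p a b) i = vdigit p a i := by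
        intro i hi
        rw [hdn, h3 i hi, Nat.add_zero,
          Nat.mod_eq_of_lt (Stmt18Aux.vdigit_lt p hp a i)]
      have hdivm : vm p j * (vadd p a b / vm p j) = vm p j * (a / vm p j) := by
        rw [Stmt18Aux.highpart p hKn (by omega), Stmt18Aux.highpart p hKa (by omega)]
        exact Finset.sum_congr rfl (fun i hi => by rw [hhigh i (Finset.mem_Ico.mp hi).1])
      have hmod : (vdigit p a (j-1) + 1) * vm p (j-1) ≤ vadd p a b % vm p j := by
        rw [Stmt18Aux.mod_sum p (vadd p a b) j]
        have hsingle : vdigit p (vadd p a b) (j-1) * vm p (j-1)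
            ≤ ∑ i ∈ Finset.range j, vdigit p (vadd p a b) i * vm p i :=
          Finset.single_le_sum (f := fun i => vdigit p (vadd p a b) i * vm p i)
            (fun i _ => Nat.zero_le _) (Finset.mem_range.mpr (by omega))
        calc (vdigit p a (j-1) + 1) * vm p (j-1)
            ≤ vdigit p (vadd p a b) (j-1) * vm p (j-1) :=
              Nat.mul_le_mul_right _ (by omega)
          _ ≤ ∑ i ∈ Finset.range j, vdigit p (vadd p a b) i * vm p i := hsingle
      have hmodlt : vadd p a b % vm p j < vm p j := Nat.mod_lt _ (Stmt18Aux.vm_pos p hp j)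
      have hda := Nat.div_add_mod (vadd p a b) (vm p j)
      exact ⟨vadd p a b, ⟨by omega, by omega⟩, hsub⟩
  refine ⟨key, fun b hb => ?_⟩
  have hb2 : b ∈ {n : ℕ | 1 ≤ vdigit p n (j-1)
      ∧ vdigit p n (j-1) ≤ p (j-1) - 1 - vdigit p a (j-1)
      ∧ ∀ i, j ≤ i → vdigit p n i = 0} := by
    rw [← key]; exact Finset.mem_coe.mpr hb
  obtain ⟨h1, h2, h3⟩ := hb2
  have hblt : b < vm p j := Stmt18Aux.lt_of_high_digits_zero p hp h3
  have hge : vm p (j-1) ≤ b := by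
    have hle := Stmt18Aux.digit_mul_vm_le p b (j-1)
    have : 1 * vm p (j-1) ≤ vdigit p b (j-1) * vm p (j-1) := Nat.mul_le_mul_right _ h1
    omega
  have hcomm : vm p (j-1) * p (j-1) = p (j-1) * vm p (j-1) := Nat.mul_comm _ _
  rw [Finset.mem_Ico]
  omega
end
end
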